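/- For λ ∈ ℂⁿ with pairwise distinct entries, the Vandermonde basis functions satisfy v_{0,λ}(0) = 1 and v_{k,λ}(0) = 0 for all k = 1, …, n-1. -/

import Mathlib

open Finset Polynomial

noncomputable def acoef {R : Type*} [CommRing R] {n : ℕ} (lam : Fin n → R) (k : ℤ) : R :=
  if 0 ≤ k ∧ k ≤ (n : ℤ) then
    (-1 : R) ^ (n - k.toNat) *
      ∑ I ∈ Finset.univ.powersetCard (n - k.toNat), ∏ i ∈ I, lam i
  else 0

def removeEntry {α : Type*} {n : ℕ} (lam : Fin n → α) (i : Fin n) : Fin (n - 1) → α :=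
  fun j => lam (Fin.cast (Nat.succ_pred_eq_of_pos i.pos)
    ((Fin.cast (Nat.succ_pred_eq_of_pos i.pos).symm i).succAbove j))

-- the reindexing embedding
def remEmb {n : ℕ} (i : Fin n) : Fin (n-1) ↪ Fin n :=
  ⟨fun j => Fin.cast (Nat.succ_pred_eq_of_pos i.pos)
    ((Fin.cast (Nat.succ_pred_eq_of_pos i.pos).symm i).succAbove j),
   by
    intro a b hab
    have := (Fin.cast_injective _) hab
    exact Fin.succAbove_right_injective this⟩

lemma remEmb_image {n : ℕ} (i : Fin n) :
    Finset.map (remEmb i) Finset.univ = Finset.univ.erase i := by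
  apply Finset.eq_of_subset_of_card_le
  · intro x hx
    simp only [Finset.mem_map, Finset.mem_univ, true_and] at hx
    obtain ⟨j, hj⟩ := hx
    rw [Finset.mem_erase]
    refine ⟨?_, Finset.mem_univ _⟩
    rw [← hj]
    intro hc
    have : (Fin.cast (Nat.succ_pred_eq_of_pos i.pos).symm i).succAbove j
        = Fin.cast (Nat.succ_pred_eq_of_pos i.pos).symm i := by
      apply Fin.cast_injective (Nat.succ_pred_eq_of_pos i.pos)
      exact hc
    exact Fin.succAbove_ne _ j this
  · simp [Finset.card_erase_of_mem]

lemma removeEntry_eq {n : ℕ} {α : Type*} (lam : Fin n → α) (i : Fin n) :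
    removeEntry lam i = lam ∘ (remEmb i) := rfl

noncomputable def vbasisC {n : ℕ} (lam : Fin n → ℂ) (k : ℤ) (t : ℝ) : ℂ :=
  (-1 : ℂ) ^ (n - 1) *
    ∑ i : Fin n, acoef (removeEntry lam i) k /
      (∏ j ∈ Finset.univ.erase i, (lam j - lam i)) * Complex.exp (lam i * t)

lemma acoef_removeEntry {n : ℕ} (lam : Fin n → ℂ) (i : Fin n) (k : ℕ) (hk : k ≤ n - 1) :
    acoef (removeEntry lam i) (k : ℤ) =
      ((Finset.univ.erase i).prod fun j => X - C (lam j)).coeff k := by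
  have hcard : #(Finset.univ.erase i) = n - 1 := by simp [Finset.card_erase_of_mem]
  have hprod : ((Finset.univ.erase i).prod fun j => X - C (lam j)) =
      (((Finset.univ.erase i).val.map lam).map fun t => X - C t).prod := by
    rw [Multiset.map_map]; rfl
  rw [hprod, Multiset.prod_X_sub_C_coeff]
  swap
  · simpa [hcard] using hk
  have hmul : (Finset.univ.erase i).val.map lam = Multiset.map (removeEntry lam i) Finset.univ.val := by
    rw [← remEmb_image i, removeEntry_eq, Finset.map_val, Multiset.map_map]
  rw [hmul]
  have hcard2 : Multiset.card (Multiset.map (removeEntry lam i) Finset.univ.val) = n - 1 := by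
    simp
  rw [hcard2, Finset.esymm_map_val]
  rw [acoef]
  rw [if_pos]
  · simp
  · constructor
    · positivity
    · exact_mod_cast hk

lemma vbasis_coeff (n : ℕ) (hn : 0 < n) (lam : Fin n → ℂ) (h : Function.Injective lam)
    (k : ℕ) (hk : k ≤ n - 1) :
    vbasisC lam (k : ℤ) 0 = (1 : ℂ[X]).coeff k := by
  rw [← Lagrange.sum_basis (Function.Injective.injOn h) (Finset.univ_nonempty_iff.mpr ⟨⟨0,hn⟩⟩)]
  rw [Polynomial.finset_sum_coeff]
  rw [vbasisC, Finset.mul_sum]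
  apply Finset.sum_congr rfl
  intro i _
  rw [acoef_removeEntry lam i k hk]
  rw [Lagrange.basis]
  have : ∏ j ∈ Finset.univ.erase i, Lagrange.basisDivisor (lam i) (lam j)
      = C (∏ j ∈ Finset.univ.erase i, (lam i - lam j)⁻¹) *
        ∏ j ∈ Finset.univ.erase i, (X - C (lam j)) := by
    simp only [Lagrange.basisDivisor]
    rw [Finset.prod_mul_distrib, map_prod]
  rw [this, Polynomial.coeff_C_mul]
  have hcard : #(Finset.univ.erase i) = n - 1 := by simp [Finset.card_erase_of_mem]
  have hsign : ∏ j ∈ Finset.univ.erase i, (lam j - lam i)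
      = (-1 : ℂ)^(n-1) * ∏ j ∈ Finset.univ.erase i, (lam i - lam j) := by
    rw [← hcard, ← Finset.prod_const, ← Finset.prod_mul_distrib]
    apply Finset.prod_congr rfl
    intro j _; ring
  have hs : ((-1:ℂ)^(n-1)) ≠ 0 := pow_ne_zero _ (by norm_num)
  rw [hsign]
  simp only [Complex.ofReal_zero, mul_zero, Complex.exp_zero, mul_one]
  rw [← mul_div_assoc, mul_div_mul_left _ _ hs, Finset.prod_inv_distrib, div_eq_inv_mul]

theorem vandermonde_basis_initial_values (n : ℕ) (hn : 0 < n) (lam : Fin n → ℂ)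
    (h : Function.Injective lam) :
    vbasisC lam 0 0 = 1 ∧ ∀ k : ℕ, 1 ≤ k → k < n → vbasisC lam (k : ℤ) 0 = 0 := by
  have h0 : vbasisC lam 0 0 = (1 : ℂ[X]).coeff 0 := by
    have := vbasis_coeff n hn lam h 0 (Nat.zero_le _)
    simpa using this
  constructor
  · rw [h0]; simp
  · intro k hk1 hkn
    rw [vbasis_coeff n hn lam h k (by omega)]
    rw [Polynomial.coeff_one, if_neg (by omega)]
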